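/- Let v_1,…,v_J be affinely independent points in a finite-dimensional real inner product space E, and let S be a finite set with {v_1,…,v_J} ⊆ S ⊆ convexHull{v_1,…,v_J}. Fix 2 ≤ r ≤ J, and let Π be the orthogonal projection of E onto the orthogonal complement of the linear span of {v_2 − v_1, …, v_{r−1} − v_1} (the span being the zero subspace when r = 2). If x ∈ S attains the maximum of ‖Π(· − v_1)‖ over S, then x = v_i for some i ∈ {r,…,J}. -/

import Mathlib

open Finset RealInnerProductSpace

set_option maxHeartbeats 1000000

/-- Correctness of the recursive step of the successive projection
algorithm: with affinely independent points `v 0, …, v (J-1)` (representing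
`v_1, …, v_J`), `2 ≤ r ≤ J`, and `Π` the orthogonal projection onto the orthogonal
complement of `span {v_i - v_0 : 1 ≤ i ≤ r - 2}` (one-based: `{v_2 - v_1, …, v_{r-1} - v_1}`),
any point of `S` maximizing `‖Π (· - v 0)‖` is a vertex `v i` with one-based index `≥ r`. -/
theorem successive_projection_step
    {E : Type*} [NormedAddCommGroup E] [InnerProductSpace ℝ E] [FiniteDimensional ℝ E]
    (J : ℕ) (hJ : 0 < J) (v : Fin J → E) (hv : AffineIndependent ℝ v)
    (S : Finset E)
    (hVS : ∀ j, v j ∈ S)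
    (hSV : ∀ y ∈ S, y ∈ convexHull ℝ (Set.range v))
    (r : ℕ) (hr2 : 2 ≤ r) (hrJ : r ≤ J)
    (K : Submodule ℝ E)
    (hK : K = (Submodule.span ℝ
      {w : E | ∃ i : Fin J, 1 ≤ (i : ℕ) ∧ (i : ℕ) ≤ r - 2 ∧ w = v i - v ⟨0, hJ⟩})ᗮ)
    (x : E) (hxS : x ∈ S)
    (hmax : ∀ y ∈ S,
      ‖(K.orthogonalProjection (y - v ⟨0, hJ⟩) : E)‖ ≤
        ‖(K.orthogonalProjection (x - v ⟨0, hJ⟩) : E)‖) :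
    ∃ i : Fin J, r ≤ (i : ℕ) + 1 ∧ x = v i := by
  classical
  set i₀ : Fin J := ⟨0, hJ⟩ with hi₀
  set v0 : E := v i₀ with hv0
  set Sp : Submodule ℝ E := Submodule.span ℝ
      {w : E | ∃ i : Fin J, 1 ≤ (i : ℕ) ∧ (i : ℕ) ≤ r - 2 ∧ w = v i - v0} with hSp
  subst hK
  -- `Kᗮ = Sp`
  have hKo : Spᗮᗮ = Sp := Submodule.orthogonal_orthogonal Sp
  -- the projection as a linear map to `E`
  set P : E →ₗ[ℝ] E := Sp.orthogonal.subtype.comp (Spᗮ.orthogonalProjection).toLinearMap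
    with hP
  have hPapp : ∀ u : E, (Spᗮ.orthogonalProjection u : E) = P u := fun u => rfl
  set w : Fin J → E := fun i => P (v i - v0) with hw
  -- difference family and linear independence
  set f : {y : Fin J // y ≠ i₀} → E := fun i => v i - v0 with hf
  have hli : LinearIndependent ℝ f := by
    have := (affineIndependent_iff_linearIndependent_vsub ℝ v i₀).mp hv
    simpa [hf, vsub_eq_sub] using this
  set T : Set {y : Fin J // y ≠ i₀} := {i | ((i : Fin J) : ℕ) ≤ r - 2} with hT
  have hSpT : Sp = Submodule.span ℝ (f '' T) := by
    rw [hSp]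
    congr 1
    ext u
    constructor
    · rintro ⟨i, h1, h2, rfl⟩
      have hne : i ≠ i₀ := by
        intro h; rw [h] at h1; simp [hi₀] at h1
      exact ⟨⟨i, hne⟩, h2, rfl⟩
    · rintro ⟨⟨i, hne⟩, hiT, rfl⟩
      refine ⟨i, ?_, hiT, rfl⟩
      have : (i : ℕ) ≠ 0 := fun h => hne (Fin.ext h)
      omega
  -- vanishing of projections of early differences
  have hw0 : ∀ i : Fin J, (i : ℕ) ≤ r - 2 → w i = 0 := by
    intro i hi
    by_cases h0 : i = i₀
    · simp [hw, h0, hv0]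
    · have hmem : v i - v0 ∈ Sp := by
        apply Submodule.subset_span
        refine ⟨i, ?_, hi, rfl⟩
        have : (i : ℕ) ≠ 0 := fun h => h0 (Fin.ext h)
        omega
      have : Spᗮ.orthogonalProjection (v i - v0) = 0 :=
        Submodule.orthogonalProjectionOnto_apply_of_mem_orthogonal
          (by rw [hKo]; exact hmem)
      have := congrArg (Subtype.val) this
      simpa [hw, hPapp] using this
  -- vanishing projection implies membership in `Sp`
  have hPzero : ∀ u : E, P u = 0 → u ∈ Sp := by
    intro u hu
    have : Spᗮ.orthogonalProjection u = 0 := by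
      ext; simpa [hPapp] using hu
    rw [← hKo]; exact Submodule.orthogonalProjectionOnto_eq_zero_iff.mp this
  -- key injectivity among late vertices
  have hkey : ∀ i j : Fin J, r - 1 ≤ (i : ℕ) → r - 1 ≤ (j : ℕ) → v i - v j ∈ Sp → i = j := by
    intro i j hi hj hmem
    by_contra hne
    have hi0 : i ≠ i₀ := fun h => by
      rw [h] at hi; simp [hi₀] at hi; omega
    have hj0 : j ≠ i₀ := fun h => by
      rw [h] at hj; simp [hi₀] at hj; omega
    set iS : {y : Fin J // y ≠ i₀} := ⟨i, hi0⟩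
    set jS : {y : Fin J // y ≠ i₀} := ⟨j, hj0⟩
    have hdiff : f iS - f jS ∈ Submodule.span ℝ (f '' T) := by
      rw [← hSpT]
      simpa [hf] using hmem
    have hmem' : f iS ∈ Submodule.span ℝ (f '' (insert jS T)) := by
      rw [Set.image_insert_eq]
      have h1 : f iS - f jS ∈ Submodule.span ℝ (insert (f jS) (f '' T)) :=
        Submodule.span_mono (Set.subset_insert _ _) hdiff
      have h2 : f jS ∈ Submodule.span ℝ (insert (f jS) (f '' T)) :=
        Submodule.subset_span (Set.mem_insert _ _)
      have := Submodule.add_mem _ h1 h2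
      simpa using this
    have hnotmem : iS ∉ insert jS T := by
      intro h
      rcases h with h | h
      · exact hne (by simpa [iS, jS] using congrArg Subtype.val h)
      · have : (i : ℕ) ≤ r - 2 := h
        omega
    exact hli.notMem_span_image hnotmem hmem'
  -- the maximum value
  set M : ℝ := ‖(Spᗮ.orthogonalProjection (x - v0) : E)‖ with hM
  have hwM : ∀ i : Fin J, ‖w i‖ ≤ M := by
    intro i
    have := hmax (v i) (hVS i)
    simpa [hw, hPapp, hM] using this
  -- positivity of `M`
  have hMpos : 0 < M := by
    have hr1 : r - 1 < J := by omega
    set i1 : Fin J := ⟨r - 1, hr1⟩ with hi1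
    have hw1 : w i1 ≠ 0 := by
      intro h
      have hmem : v i1 - v0 ∈ Sp := hPzero _ h
      have hne : i1 ≠ i₀ := by
        intro h'; have := congrArg Fin.val h'; simp [hi1, hi₀] at this; omega
      set i1S : {y : Fin J // y ≠ i₀} := ⟨i1, hne⟩
      have hmem' : f i1S ∈ Submodule.span ℝ (f '' T) := by
        rw [← hSpT]; simpa [hf] using hmem
      have hnotmem : i1S ∉ T := by
        intro h'
        have : ((i1 : Fin J) : ℕ) ≤ r - 2 := h'
        simp [hi1] at this
        omega
      exact hli.notMem_span_image hnotmem hmem'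
    have : 0 < ‖w i1‖ := norm_pos_iff.mpr hw1
    linarith [hwM i1]
  -- convex representation of x
  obtain ⟨s, c, hc0, hc1, hcx⟩ : ∃ (s : Finset (Fin J)) (c : Fin J → ℝ),
      (∀ i ∈ s, 0 ≤ c i) ∧ s.sum c = 1 ∧ s.affineCombination ℝ v c = x := by
    have := hSV x hxS
    rw [convexHull_range_eq_exists_affineCombination] at this
    exact this
  have hxsum : x = ∑ i ∈ s, c i • v i := by
    rw [← hcx, affineCombination_eq_linear_combination s v c hc1]
  have hxv0 : x - v0 = ∑ i ∈ s, c i • (v i - v0) := by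
    rw [hxsum]
    rw [Finset.sum_congr rfl (fun i _ => smul_sub (c i) (v i) v0)]
    rw [Finset.sum_sub_distrib, ← Finset.sum_smul, hc1, one_smul]
  have hPx : P (x - v0) = ∑ i ∈ s, c i • w i := by
    rw [hxv0, map_sum]
    exact Finset.sum_congr rfl fun i _ => map_smul P (c i) _
  -- expand the squared norm
  have hM2 : M ^ 2 = ∑ i ∈ s, ∑ j ∈ s, c i * c j * ⟪w i, w j⟫ := by
    have h1 : M ^ 2 = ⟪P (x - v0), P (x - v0)⟫ := by
      rw [hM, hPapp, real_inner_self_eq_norm_sq]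
    rw [h1, hPx, sum_inner]
    refine Finset.sum_congr rfl fun i _ => ?_
    rw [real_inner_smul_left, inner_sum, Finset.mul_sum]
    refine Finset.sum_congr rfl fun j _ => ?_
    rw [real_inner_smul_right]
    ring
  have hM2' : M ^ 2 = ∑ i ∈ s, ∑ j ∈ s, c i * c j * M ^ 2 := by
    have h := Finset.sum_mul_sum s s c fun j => c j * M ^ 2
    have h2 : ∑ j ∈ s, c j * M ^ 2 = M ^ 2 := by
      rw [← Finset.sum_mul, hc1, one_mul]
    rw [hc1, h2, one_mul] at h
    refine h.trans (Finset.sum_congr rfl fun i _ => Finset.sum_congr rfl fun j _ => by ring)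
  have hterm_nonneg : ∀ i ∈ s, ∀ j ∈ s, 0 ≤ c i * c j * (M ^ 2 - ⟪w i, w j⟫) := by
    intro i hi j hj
    apply mul_nonneg (mul_nonneg (hc0 i hi) (hc0 j hj))
    have h1 : ⟪w i, w j⟫ ≤ ‖w i‖ * ‖w j‖ := real_inner_le_norm _ _
    have h2 : ‖w i‖ * ‖w j‖ ≤ M * M :=
      mul_le_mul (hwM i) (hwM j) (norm_nonneg _) (le_of_lt hMpos)
    nlinarith
  have hsum0 : ∑ i ∈ s, ∑ j ∈ s, c i * c j * (M ^ 2 - ⟪w i, w j⟫) = 0 := by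
    have : ∑ i ∈ s, ∑ j ∈ s, c i * c j * (M ^ 2 - ⟪w i, w j⟫)
        = (∑ i ∈ s, ∑ j ∈ s, c i * c j * M ^ 2)
          - ∑ i ∈ s, ∑ j ∈ s, c i * c j * ⟪w i, w j⟫ := by
      rw [← Finset.sum_sub_distrib]
      refine Finset.sum_congr rfl fun i _ => ?_
      rw [← Finset.sum_sub_distrib]
      exact Finset.sum_congr rfl fun j _ => by ring
    rw [this, ← hM2, ← hM2', sub_self]
  have hterm0 : ∀ i ∈ s, ∀ j ∈ s, c i * c j * (M ^ 2 - ⟪w i, w j⟫) = 0 := by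
    intro i hi j hj
    have houter := (Finset.sum_eq_zero_iff_of_nonneg
      (fun i hi => Finset.sum_nonneg (hterm_nonneg i hi))).mp hsum0 i hi
    exact (Finset.sum_eq_zero_iff_of_nonneg (hterm_nonneg i hi)).mp houter j hj
  -- find an index with positive weight
  obtain ⟨a, ha, hca⟩ : ∃ a ∈ s, 0 < c a := by
    by_contra h
    push_neg at h
    have : s.sum c ≤ 0 := Finset.sum_nonpos fun i hi => h i hi
    rw [hc1] at this; linarith
  -- every index with positive weight equals `a`
  have hinner : ∀ j ∈ s, 0 < c j → ⟪w a, w j⟫ = M ^ 2 := by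
    intro j hj hcj
    have := hterm0 a ha j hj
    have hpos : 0 < c a * c j := mul_pos hca hcj
    have : M ^ 2 - ⟪w a, w j⟫ = 0 := by
      rcases mul_eq_zero.mp this with h | h
      · exact absurd h (ne_of_gt hpos)
      · exact h
    linarith
  have hnorm : ∀ j ∈ s, 0 < c j → ‖w j‖ = M := by
    intro j hj hcj
    have h1 : ⟪w j, w j⟫ = M ^ 2 := by
      have := hterm0 j hj j hj
      have hpos : 0 < c j * c j := mul_pos hcj hcj
      rcases mul_eq_zero.mp this with h | h
      · exact absurd h (ne_of_gt hpos)
      · linarith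
    have h2 : ‖w j‖ ^ 2 = M ^ 2 := by rw [← real_inner_self_eq_norm_sq, h1]
    have h3 : (‖w j‖ - M) * (‖w j‖ + M) = 0 := by nlinarith
    rcases mul_eq_zero.mp h3 with h | h
    · linarith
    · linarith [norm_nonneg (w j)]
  have hweq : ∀ j ∈ s, 0 < c j → w j = w a := by
    intro j hj hcj
    have h1 : ⟪w a, w j⟫ = ‖w a‖ * ‖w j‖ := by
      rw [hnorm j hj hcj, hnorm a ha hca, hinner j hj hcj]; ring
    have h2 := inner_eq_norm_mul_iff_real.mp h1
    rw [hnorm j hj hcj, hnorm a ha hca] at h2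
    have := smul_right_injective E (ne_of_gt hMpos) h2
    exact this.symm
  -- positive-weight indices are late vertices
  have hlate : ∀ j ∈ s, 0 < c j → r - 1 ≤ (j : ℕ) := by
    intro j hj hcj
    by_contra h
    push_neg at h
    have : (j : ℕ) ≤ r - 2 := by omega
    have : w j = 0 := hw0 j this
    have := hnorm j hj hcj
    rw [‹w j = 0›] at this
    simp at this
    exact absurd this.symm (ne_of_gt hMpos)
  -- all positive-weight indices equal a
  have hja : ∀ j ∈ s, 0 < c j → j = a := by
    intro j hj hcj
    have hwja : w j = w a := hweq j hj hcj
    have : P (v j - v a) = 0 := by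
      have : v j - v a = (v j - v0) - (v a - v0) := by abel
      rw [this, map_sub]
      show w j - w a = 0
      rw [hwja, sub_self]
    have hmem : v j - v a ∈ Sp := hPzero _ this
    exact hkey j a (hlate j hj hcj) (hlate a ha hca) hmem
  refine ⟨a, by have := hlate a ha hca; omega, ?_⟩
  rw [hxsum]
  have : ∀ j ∈ s, c j • v j = c j • v a := by
    intro j hj
    rcases lt_or_eq_of_le (hc0 j hj) with h | h
    · rw [hja j hj h]
    · rw [← h, zero_smul, zero_smul]
  rw [Finset.sum_congr rfl this, ← Finset.sum_smul, hc1, one_smul]
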